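/- arXiv:0906.4396 — 2 statements merged into one kernel-verified Lean document; each statement's English description precedes it below -/
import Mathlib

section
/- Let R be a commutative ring and R' a subring of R (with the same identity), and let ι : R'⟨X₁,…,Xₙ⟩ → R⟨X₁,…,Xₙ⟩ be the canonical injective ring homomorphism between the free algebras induced by the inclusion R' ⊆ R (which is the identity on monomials). Fix a monomial ordering ≺ on the common standard monomial basis B. Then for a subset G ⊆ R'⟨X₁,…,Xₙ⟩, G is an LM-reduced monic Gröbner basis of the ideal ⟨G⟩ of R'⟨X₁,…,Xₙ⟩ if and only if ι(G) is an LM-reduced monic Gröbner basis of the ideal ⟨ι(G)⟩ of R⟨X₁,…,Xₙ⟩ with respect to the same ordering ≺. -/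
set_option linter.unusedSectionVars false


noncomputable section
open MonoidAlgebra
open scoped Classical

/-- Words in the alphabet `X_1, ..., X_n`: the standard monomial basis `B`. -/
abbrev Word (n : ℕ) : Type := FreeMonoid (Fin n)

/-- The free `R`-algebra `R⟨X_1, ..., X_n⟩`, realized as the monoid algebra of the
free monoid on `n` letters over `R`. -/
abbrev FreeAlg (R : Type) [CommRing R] (n : ℕ) : Type := MonoidAlgebra R (Word n)

variable {R : Type} [CommRing R] {n : ℕ}

/-- The monomial (word) `w` viewed as an element of the free algebra. -/
def mono (R : Type) [CommRing R] {n : ℕ} (w : Word n) : FreeAlg R n :=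
  MonoidAlgebra.of R (Word n) w

/-- A monomial ordering: a well-ordering on words compatible with two-sided multiplication. -/
def IsMonomialOrder (n : ℕ) [LinearOrder (Word n)] : Prop :=
  WellFoundedLT (Word n) ∧ ∀ w u v s : Word n, u < v → w * u * s < w * v * s

/-- The leading monomial of `f` (with junk value `1` for `f = 0`). -/
def LMon [LinearOrder (Word n)] (f : FreeAlg R n) : Word n :=
  if h : f = 0 then 1 else f.coeff.support.max' (Finsupp.support_nonempty_iff.mpr (mt MonoidAlgebra.coeff_eq_zero.mp h))

/-- The leading coefficient of `f`. -/
def LCoef [LinearOrder (Word n)] (f : FreeAlg R n) : R := f.coeff (LMon f)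

/-- `f` is monic: it is nonzero and its leading coefficient is `1`. -/
def IsMonic [LinearOrder (Word n)] (f : FreeAlg R n) : Prop := f ≠ 0 ∧ LCoef f = 1

/-- `v` divides `u` as words: `u = w * v * s` for some words `w, s`. -/
def MDvd {n : ℕ} (v u : Word n) : Prop := ∃ w s : Word n, u = w * v * s

/-- `G` is a monic Gröbner basis of the two-sided ideal `I`: every element of `G` is monic,
and the leading monomial of every nonzero element of `I` is divisible by the leading
monomial of some element of `G`. -/
def IsMonicGB [LinearOrder (Word n)] (G : Set (FreeAlg R n))
    (I : TwoSidedIdeal (FreeAlg R n)) : Prop :=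
  (∀ g ∈ G, IsMonic g) ∧ ∀ f ∈ I, f ≠ 0 → ∃ g ∈ G, MDvd (LMon g) (LMon f)

/-- `G` is LM-reduced: for distinct `g, g' ∈ G`, `LM(g)` does not divide `LM(g')`. -/
def LMReduced [LinearOrder (Word n)] (G : Set (FreeAlg R n)) : Prop :=
  ∀ g ∈ G, ∀ g' ∈ G, g ≠ g' → ¬ MDvd (LMon g) (LMon g')

/-- The canonical (injective, coefficientwise) map `R'⟨X⟩ → R⟨X⟩` induced by the
inclusion of the subring `R' ⊆ R`; it is the identity on monomials. -/
def incl (R' : Subring R) (f : FreeAlg (↥R') n) : FreeAlg R n :=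
  MonoidAlgebra.ofCoeff (Finsupp.mapRange (fun a : ↥R' => (a : R)) (by simp) f.coeff)

section Aux
variable [LinearOrder (Word n)]

lemma conj_le (hord : IsMonomialOrder n) (w s : Word n) {u v : Word n} (h : u ≤ v) :
    w * u * s ≤ w * v * s := by
  rcases eq_or_lt_of_le h with rfl | h
  · exact le_rfl
  · exact le_of_lt (hord.2 w u v s h)

lemma conjW_injective (hord : IsMonomialOrder n) (w s : Word n) :
    Function.Injective (fun u : Word n => w * u * s) := by
  intro u v h
  by_contra hne
  rcases lt_or_gt_of_ne hne with h' | h'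
  · exact absurd h (ne_of_lt (hord.2 w _ _ s h'))
  · exact absurd h.symm (ne_of_lt (hord.2 w _ _ s h'))

lemma LMon_mem_support {f : FreeAlg R n} (hf : f ≠ 0) : LMon f ∈ f.coeff.support := by
  rw [LMon, dif_neg hf]; exact Finset.max'_mem _ _

lemma apply_LMon_ne_zero {f : FreeAlg R n} (hf : f ≠ 0) : f.coeff (LMon f) ≠ 0 :=
  Finsupp.mem_support_iff.mp (LMon_mem_support hf)

lemma le_LMon {f : FreeAlg R n} (hf : f ≠ 0) {u : Word n} (hu : u ∈ f.coeff.support) : u ≤ LMon f := by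
  rw [LMon, dif_neg hf]; exact Finset.le_max' _ _ hu

lemma LMon_le {f : FreeAlg R n} (hf : f ≠ 0) {T : Word n}
    (h : ∀ u ∈ f.coeff.support, u ≤ T) : LMon f ≤ T := h _ (LMon_mem_support hf)

lemma LMon_lt {f : FreeAlg R n} (hf : f ≠ 0) {T : Word n}
    (h : ∀ u ∈ f.coeff.support, u < T) : LMon f < T := h _ (LMon_mem_support hf)

lemma mono_def (w : Word n) : mono R w = MonoidAlgebra.single w 1 := rfl

lemma conj_eq_mapDomain (w s : Word n) (g : FreeAlg R n) :
    mono R w * g * mono R s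
      = MonoidAlgebra.ofCoeff (Finsupp.mapDomain (fun u : Word n => w * u * s) g.coeff) := by
  induction g using MonoidAlgebra.induction_linear with
  | zero => simp
  | add f g hf hg => rw [mul_add, add_mul, hf, hg, MonoidAlgebra.coeff_add, Finsupp.mapDomain_add,
      MonoidAlgebra.ofCoeff_add]
  | single u c =>
      rw [mono_def, mono_def, MonoidAlgebra.single_mul_single,
        MonoidAlgebra.single_mul_single, one_mul, mul_one, MonoidAlgebra.coeff_single,
        Finsupp.mapDomain_single]
      rfl

lemma support_conj (hord : IsMonomialOrder n) (w s : Word n) (g : FreeAlg R n) :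
    (mono R w * g * mono R s).coeff.support = g.coeff.support.image (fun u => w * u * s) := by
  rw [conj_eq_mapDomain]
  exact Finsupp.mapDomain_support_of_injective (conjW_injective hord w s) g.coeff

lemma apply_conj (hord : IsMonomialOrder n) (w s : Word n) (g : FreeAlg R n) (u : Word n) :
    (mono R w * g * mono R s).coeff (w * u * s) = g.coeff u := by
  rw [conj_eq_mapDomain]
  exact Finsupp.mapDomain_apply (conjW_injective hord w s) g.coeff u

lemma conj_ne_zero (hord : IsMonomialOrder n) {g : FreeAlg R n} (hg : g ≠ 0) (w s : Word n) :
    mono R w * g * mono R s ≠ 0 := by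
  intro h
  apply apply_LMon_ne_zero hg
  have h2 := apply_conj hord w s g (LMon g)
  rw [h] at h2
  simpa using h2.symm

lemma LMon_conj (hord : IsMonomialOrder n) {g : FreeAlg R n} (hg : g ≠ 0) (w s : Word n) :
    LMon (mono R w * g * mono R s) = w * LMon g * s := by
  apply le_antisymm
  · apply LMon_le (conj_ne_zero hord hg w s)
    intro u hu
    rw [support_conj hord] at hu
    obtain ⟨v, hv, rfl⟩ := Finset.mem_image.mp hu
    exact conj_le hord w s (le_LMon hg hv)
  · apply le_LMon (conj_ne_zero hord hg w s)
    rw [support_conj hord]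
    exact Finset.mem_image_of_mem _ (LMon_mem_support hg)

end Aux

section BRep
variable [LinearOrder (Word n)]

abbrev Atom (R : Type) [CommRing R] (n : ℕ) : Type := R × Word n × FreeAlg R n × Word n

def aval (x : Atom R n) : FreeAlg R n := x.1 • (mono R x.2.1 * x.2.2.1 * mono R x.2.2.2)

def atop (x : Atom R n) : Word n := x.2.1 * LMon x.2.2.1 * x.2.2.2

def RepU (H : Set (FreeAlg R n)) (f : FreeAlg R n) : Prop :=
  ∃ l : List (Atom R n), (∀ x ∈ l, x.2.2.1 ∈ H) ∧ (l.map aval).sum = f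

def BRep (H : Set (FreeAlg R n)) (f : FreeAlg R n) (M : Word n) : Prop :=
  ∃ l : List (Atom R n), (∀ x ∈ l, x.2.2.1 ∈ H) ∧ (∀ x ∈ l, atop x ≤ M) ∧
    (l.map aval).sum = f

lemma list_sum_map_add {α : Type*} {M : Type*} [AddCommMonoid M] (l : List α)
    (f g : α → M) : (l.map fun x => f x + g x).sum = (l.map f).sum + (l.map g).sum := by
  induction l with
  | nil => simp
  | cons a l ih => simp [ih]; abel

lemma list_sum_map_neg {α : Type*} {M : Type*} [AddCommGroup M] (l : List α)
    (f : α → M) : (l.map fun x => -f x).sum = -(l.map f).sum := by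
  induction l with
  | nil => simp
  | cons a l ih => simp [ih]; abel

lemma list_sum_smul_const {α : Type*} (l : List α) (c : α → R) (t : FreeAlg R n) :
    (l.map fun x => c x • t).sum = ((l.map c).sum) • t := by
  induction l with
  | nil => simp
  | cons a l ih => simp [ih, add_smul]

lemma RepU.zero (H : Set (FreeAlg R n)) : RepU H 0 := ⟨[], by simp, by simp⟩

lemma RepU.add {H : Set (FreeAlg R n)} {f g : FreeAlg R n} (hf : RepU H f) (hg : RepU H g) :
    RepU H (f + g) := by
  obtain ⟨l1, h1, e1⟩ := hf
  obtain ⟨l2, h2, e2⟩ := hg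
  refine ⟨l1 ++ l2, ?_, ?_⟩
  · intro x hx
    rcases List.mem_append.mp hx with h | h
    exacts [h1 x h, h2 x h]
  · rw [List.map_append, List.sum_append, e1, e2]

lemma RepU.neg {H : Set (FreeAlg R n)} {f : FreeAlg R n} (hf : RepU H f) : RepU H (-f) := by
  obtain ⟨l, h1, e1⟩ := hf
  refine ⟨l.map (fun x => (-x.1, x.2.1, x.2.2.1, x.2.2.2)), ?_, ?_⟩
  · intro x hx
    obtain ⟨y, hy, rfl⟩ := List.mem_map.mp hx
    exact h1 y hy
  · rw [List.map_map, ← e1]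
    have : (aval ∘ fun x : Atom R n => (-x.1, x.2.1, x.2.2.1, x.2.2.2)) =
        fun x : Atom R n => -aval x := by
      funext x; simp [aval, Function.comp, neg_smul]
    rw [this, list_sum_map_neg]
lemma RepU.single {H : Set (FreeAlg R n)} {g : FreeAlg R n} (hg : g ∈ H)
    (c : R) (w s : Word n) : RepU H (c • (mono R w * g * mono R s)) :=
  ⟨[(c, w, g, s)], by simp [hg], by simp [aval]⟩

lemma single_mul_aval (u : Word n) (c : R) (x : Atom R n) :
    MonoidAlgebra.single u c * aval x
      = aval (c * x.1, u * x.2.1, x.2.2.1, x.2.2.2) := by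
  obtain ⟨c', w, g, s⟩ := x
  simp only [aval, mono_def]
  rw [mul_smul_comm]
  rw [show (MonoidAlgebra.single u c : FreeAlg R n) * (MonoidAlgebra.single w 1 * g * MonoidAlgebra.single s 1)
      = (MonoidAlgebra.single u c * MonoidAlgebra.single w 1) * g * MonoidAlgebra.single s 1 by
    rw [mul_assoc, mul_assoc, mul_assoc]]
  rw [MonoidAlgebra.single_mul_single, mul_one]
  rw [show (MonoidAlgebra.single (u * w) c : FreeAlg R n) = c • MonoidAlgebra.single (u * w) 1 by
    rw [MonoidAlgebra.smul_single', mul_one]]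
  simp only [smul_mul_assoc, smul_smul, mul_comm c c']

lemma aval_mul_single (u : Word n) (c : R) (x : Atom R n) :
    aval x * MonoidAlgebra.single u c
      = aval (x.1 * c, x.2.1, x.2.2.1, x.2.2.2 * u) := by
  obtain ⟨c', w, g, s⟩ := x
  simp only [aval, mono_def]
  rw [smul_mul_assoc]
  rw [show (MonoidAlgebra.single w 1 * g * MonoidAlgebra.single s 1 : FreeAlg R n) * MonoidAlgebra.single u c
      = MonoidAlgebra.single w 1 * g * (MonoidAlgebra.single s 1 * MonoidAlgebra.single u c) by
    rw [mul_assoc]]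
  rw [MonoidAlgebra.single_mul_single, one_mul]
  rw [show (MonoidAlgebra.single (s * u) c : FreeAlg R n) = c • MonoidAlgebra.single (s * u) 1 by
    rw [MonoidAlgebra.smul_single', mul_one]]
  rw [mul_smul_comm, smul_smul, mul_comm c' c]

lemma list_sum_mul_left_gen {α : Type*} (a : FreeAlg R n) (l : List α)
    (F G : α → FreeAlg R n) (h : ∀ x ∈ l, a * F x = G x) :
    a * (l.map F).sum = (l.map G).sum := by
  induction l with
  | nil => simp
  | cons b l ih =>
      simp only [List.map_cons, List.sum_cons, mul_add]
      rw [h b (List.mem_cons_self), ih (fun x hx => h x (List.mem_cons_of_mem _ hx))]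

lemma list_sum_mul_right_gen {α : Type*} (a : FreeAlg R n) (l : List α)
    (F G : α → FreeAlg R n) (h : ∀ x ∈ l, F x * a = G x) :
    (l.map F).sum * a = (l.map G).sum := by
  induction l with
  | nil => simp
  | cons b l ih =>
      simp only [List.map_cons, List.sum_cons, add_mul]
      rw [h b (List.mem_cons_self), ih (fun x hx => h x (List.mem_cons_of_mem _ hx))]

lemma RepU.mul_left {H : Set (FreeAlg R n)} (a : FreeAlg R n) {f : FreeAlg R n}
    (hf : RepU H f) : RepU H (a * f) := by
  induction a using MonoidAlgebra.induction_linear with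
  | zero => rw [zero_mul]; exact RepU.zero H
  | add p q hp hq => rw [add_mul]; exact RepU.add hp hq
  | single u c =>
      obtain ⟨l, h1, e1⟩ := hf
      refine ⟨l.map (fun x => (c * x.1, u * x.2.1, x.2.2.1, x.2.2.2)), ?_, ?_⟩
      · intro x hx
        obtain ⟨y, hy, rfl⟩ := List.mem_map.mp hx
        exact h1 y hy
      · rw [List.map_map, ← e1]
        exact (list_sum_mul_left_gen _ l aval _ (fun x _ => single_mul_aval u c x)).symm

lemma RepU.mul_right {H : Set (FreeAlg R n)} (a : FreeAlg R n) {f : FreeAlg R n}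
    (hf : RepU H f) : RepU H (f * a) := by
  induction a using MonoidAlgebra.induction_linear with
  | zero => rw [mul_zero]; exact RepU.zero H
  | add p q hp hq => rw [mul_add]; exact RepU.add hp hq
  | single u c =>
      obtain ⟨l, h1, e1⟩ := hf
      refine ⟨l.map (fun x => (x.1 * c, x.2.1, x.2.2.1, x.2.2.2 * u)), ?_, ?_⟩
      · intro x hx
        obtain ⟨y, hy, rfl⟩ := List.mem_map.mp hx
        exact h1 y hy
      · rw [List.map_map, ← e1]
        exact (list_sum_mul_right_gen _ l aval _ (fun x _ => aval_mul_single u c x)).symm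

lemma repU_iff_mem_span {H : Set (FreeAlg R n)} {f : FreeAlg R n} :
    RepU H f ↔ f ∈ TwoSidedIdeal.span H := by
  constructor
  · rintro ⟨l, h1, rfl⟩
    induction l with
    | nil => simp [TwoSidedIdeal.zero_mem]
    | cons x l ih =>
        simp only [List.map_cons, List.sum_cons]
        refine TwoSidedIdeal.add_mem _ ?_ (ih (fun y hy => h1 y (List.mem_cons_of_mem _ hy)))
        have hx : x.2.2.1 ∈ TwoSidedIdeal.span H :=
          TwoSidedIdeal.subset_span (h1 x (List.mem_cons_self))
        have : aval x = (MonoidAlgebra.single 1 x.1 : FreeAlg R n) *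
            (mono R x.2.1 * x.2.2.1 * mono R x.2.2.2) := by
          rw [aval, show (MonoidAlgebra.single 1 x.1 : FreeAlg R n)
            = x.1 • (1 : FreeAlg R n) by
              rw [MonoidAlgebra.one_def, MonoidAlgebra.smul_single', mul_one], smul_mul_assoc, one_mul]
        rw [this]
        exact TwoSidedIdeal.mul_mem_left _ _ _
          (TwoSidedIdeal.mul_mem_right _ _ _
            (TwoSidedIdeal.mul_mem_left _ _ _ hx))
  · intro hmem
    have key : f ∈ TwoSidedIdeal.mk' {f : FreeAlg R n | RepU H f}
        (RepU.zero H) (fun ha hb => RepU.add ha hb) (fun ha => RepU.neg ha)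
        (fun {x y} hy => RepU.mul_left x hy) (fun {x y} hx => RepU.mul_right y hx) := by
      refine TwoSidedIdeal.mem_span_iff.mp hmem _ ?_
      intro g hg
      rw [SetLike.mem_coe, TwoSidedIdeal.mem_mk']
      refine ⟨[(1, 1, g, 1)], by simp [hg], ?_⟩
      simp [aval, mono_def]
      rw [show (MonoidAlgebra.single (1 : Word n) (1 : R)) = (1 : FreeAlg R n) from rfl]
      rw [one_mul, mul_one]
    rwa [TwoSidedIdeal.mem_mk'] at key

end BRep

section Div
variable [LinearOrder (Word n)]

lemma sum_apply_list (l : List (FreeAlg R n)) (u : Word n) :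
    l.sum.coeff u = (l.map (fun p => p.coeff u)).sum :=
  map_list_sum ((Finsupp.applyAddHom u).comp
    (MonoidAlgebra.coeffAddEquiv (R := R) (M := Word n)).toAddMonoidHom) l

lemma aval_support_le (hord : IsMonomialOrder n) {x : Atom R n} (hg : x.2.2.1 ≠ 0)
    {u : Word n} (hu : u ∈ (aval x).coeff.support) : u ≤ atop x := by
  obtain ⟨c, w, g, s⟩ := x
  have h1 : u ∈ (mono R w * g * mono R s).coeff.support := by
    have := Finsupp.support_smul (b := c) (g := (mono R w * g * mono R s).coeff)
    exact this hu
  rw [support_conj hord] at h1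
  obtain ⟨v, hv, rfl⟩ := Finset.mem_image.mp h1
  exact conj_le hord w s (le_LMon hg hv)

lemma aval_apply_atop (hord : IsMonomialOrder n) (x : Atom R n) (hg : x.2.2.1 ≠ 0) :
    (aval x).coeff (atop x) = x.1 * LCoef x.2.2.1 := by
  obtain ⟨c, w, g, s⟩ := x
  show (c • (mono R w * g * mono R s)).coeff (w * LMon g * s) = c * LCoef g
  rw [MonoidAlgebra.coeff_smul, Finsupp.smul_apply, apply_conj hord, smul_eq_mul]; rfl

lemma aval_apply_of_lt (hord : IsMonomialOrder n) {x : Atom R n} (hg : x.2.2.1 ≠ 0)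
    {T : Word n} (h : atop x < T) : (aval x).coeff T = 0 := by
  by_contra hc
  exact absurd (aval_support_le hord hg (Finsupp.mem_support_iff.mpr hc)) (not_le.mpr h)

/-- Division with remainder zero: every nonzero element of the span of a monic
Gröbner-type family has a standard representation bounded by its leading monomial. -/
lemma div_rep (hord : IsMonomialOrder n) (H : Set (FreeAlg R n))
    (hmon : ∀ g ∈ H, IsMonic g)
    (hGB : ∀ f, RepU H f → f ≠ 0 → ∃ g ∈ H, MDvd (LMon g) (LMon f)) :
    ∀ f, RepU H f → f ≠ 0 → BRep H f (LMon f) := by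
  suffices key : ∀ m : Word n, ∀ f : FreeAlg R n, RepU H f → f ≠ 0 → LMon f = m →
      BRep H f m by
    intro f hf hne
    exact key _ f hf hne rfl
  intro m
  induction m using WellFounded.induction (hord.1.wf) with
  | _ m IH =>
  intro f hf hne hm
  subst hm
  obtain ⟨g, hgH, w, s, hws⟩ := hGB f hf hne
  have hg0 : g ≠ 0 := (hmon g hgH).1
  set t : FreeAlg R n := mono R w * g * mono R s with ht
  have hLt : LMon t = LMon f := by rw [ht, LMon_conj hord hg0, hws]
  have htf : t.coeff (LMon f) = 1 := by
    have := apply_conj hord w s g (LMon g)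
    rw [← ht, ← hws] at this
    rw [this]
    exact (hmon g hgH).2
  set c : R := f.coeff (LMon f) with hc
  have hsupt : ∀ u ∈ t.coeff.support, u ≤ LMon f := by
    intro u hu
    rw [← hLt]
    exact le_LMon (conj_ne_zero hord hg0 w s) hu
  set f' : FreeAlg R n := f - c • t with hf'
  have hf'mem : RepU H f' := by
    have : f' = f + aval (-c, w, g, s) := by
      rw [hf', aval]
      show f - c • t = f + (-c) • (mono R w * g * mono R s)
      rw [← ht, neg_smul, sub_eq_add_neg]
    rw [this]
    exact RepU.add hf ⟨[(-c, w, g, s)], by simp [hgH], by simp⟩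
  have hsupf' : ∀ u ∈ f'.coeff.support, u ≤ LMon f := by
    intro u hu
    have := Finsupp.support_sub (f := f.coeff) (g := (c • t).coeff)
      (by rw [← MonoidAlgebra.coeff_sub, ← hf']; exact hu)
    rcases Finset.mem_union.mp this with h | h
    · exact le_LMon hne h
    · exact hsupt u (Finsupp.support_smul (show u ∈ (c • t.coeff).support from h))
  have hf'top : f'.coeff (LMon f) = 0 := by
    rw [hf', MonoidAlgebra.coeff_sub, Finsupp.sub_apply, MonoidAlgebra.coeff_smul,
      Finsupp.smul_apply, htf, smul_eq_mul, mul_one, ← hc, sub_self]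
  by_cases h0 : f' = 0
  · refine ⟨[(c, w, g, s)], by simp [hgH], ?_, ?_⟩
    · intro x hx
      simp only [List.mem_singleton] at hx
      subst hx
      rw [atop, ← hws]
    · have : f = c • t := by rw [← sub_eq_zero, ← hf', h0]
      simp [aval, ← ht, this]
  · have hlt : LMon f' < LMon f := by
      apply LMon_lt h0
      intro u hu
      refine lt_of_le_of_ne (hsupf' u hu) ?_
      rintro rfl
      exact (Finsupp.mem_support_iff.mp hu) hf'top
    obtain ⟨l, hl1, hl2, hl3⟩ := IH (LMon f') hlt f' hf'mem h0 rfl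
    refine ⟨l ++ [(c, w, g, s)], ?_, ?_, ?_⟩
    · intro x hx
      rcases List.mem_append.mp hx with h | h
      · exact hl1 x h
      · simp only [List.mem_singleton] at h; subst h; exact hgH
    · intro x hx
      rcases List.mem_append.mp hx with h | h
      · exact le_of_lt (lt_of_le_of_lt (hl2 x h) hlt)
      · simp only [List.mem_singleton] at h; subst h
        rw [atop, ← hws]
    · rw [List.map_append, List.sum_append, hl3]
      have : aval ((c, w, g, s) : Atom R n) = c • t := by rw [aval, ← ht]
      simp [this, hf']

end Div

section Main
variable [LinearOrder (Word n)]

def tval (x : Atom R n) : FreeAlg R n := mono R x.2.1 * x.2.2.1 * mono R x.2.2.2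

lemma aval_eq_smul_tval (x : Atom R n) : aval x = x.1 • tval x := rfl

lemma tval_support_le (hord : IsMonomialOrder n) {x : Atom R n} (hg : x.2.2.1 ≠ 0)
    {u : Word n} (hu : u ∈ (tval x).coeff.support) : u ≤ atop x := by
  obtain ⟨c, w, g, s⟩ := x
  rw [tval, support_conj hord] at hu
  obtain ⟨v, hv, rfl⟩ := Finset.mem_image.mp hu
  exact conj_le hord w s (le_LMon hg hv)

lemma tval_apply_atop (hord : IsMonomialOrder n) (x : Atom R n) :
    (tval x).coeff (atop x) = LCoef x.2.2.1 := by
  obtain ⟨c, w, g, s⟩ := x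
  exact apply_conj hord w s g (LMon g)

lemma list_sum_smul_gen {α : Type*} (c : R) (l : List α)
    (F G : α → FreeAlg R n) (h : ∀ x ∈ l, c • F x = G x) :
    c • (l.map F).sum = (l.map G).sum := by
  induction l with
  | nil => simp
  | cons b l ih =>
      simp only [List.map_cons, List.sum_cons, smul_add]
      rw [h b (List.mem_cons_self), ih (fun x hx => h x (List.mem_cons_of_mem _ hx))]

lemma BRep.smul {H : Set (FreeAlg R n)} {f : FreeAlg R n} {M : Word n} (c : R)
    (h : BRep H f M) : BRep H (c • f) M := by
  obtain ⟨l, h1, h2, h3⟩ := h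
  refine ⟨l.map (fun x => (c * x.1, x.2.1, x.2.2.1, x.2.2.2)), ?_, ?_, ?_⟩
  · intro x hx; obtain ⟨y, hy, rfl⟩ := List.mem_map.mp hx; exact h1 y hy
  · intro x hx; obtain ⟨y, hy, rfl⟩ := List.mem_map.mp hx; exact h2 y hy
  · rw [List.map_map, ← h3]
    refine (list_sum_smul_gen c l aval _ ?_).symm
    intro x _
    show c • aval x = aval (c * x.1, x.2.1, x.2.2.1, x.2.2.2)
    rw [aval_eq_smul_tval, aval_eq_smul_tval, smul_smul]
    rfl

lemma list_rep_concat {α : Type*} [LinearOrder (Word n)] (l : List α) (F : α → FreeAlg R n)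
    (P : Atom R n → Prop)
    (h : ∀ b ∈ l, ∃ L : List (Atom R n), (∀ x ∈ L, P x) ∧ (L.map aval).sum = F b) :
    ∃ L : List (Atom R n), (∀ x ∈ L, P x) ∧ (L.map aval).sum = (l.map F).sum := by
  induction l with
  | nil => exact ⟨[], by simp, by simp⟩
  | cons b l ih =>
      obtain ⟨L1, hL11, hL12⟩ := h b (List.mem_cons_self)
      obtain ⟨L2, hL21, hL22⟩ := ih (fun x hx => h x (List.mem_cons_of_mem _ hx))
      refine ⟨L1 ++ L2, ?_, ?_⟩
      · intro x hx
        rcases List.mem_append.mp hx with h' | h'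
        exacts [hL11 x h', hL21 x h']
      · rw [List.map_append, List.sum_append, hL12, hL22, List.map_cons, List.sum_cons]

lemma list_sum_filter_partition {α : Type*} {M : Type*} [AddCommMonoid M]
    (q : α → Bool) (l : List α) (F : α → M) :
    (l.map F).sum = ((l.filter q).map F).sum + ((l.filter (fun x => ! q x)).map F).sum := by
  induction l with
  | nil => simp
  | cons b l ih =>
      cases hq : q b <;>
        simp only [List.filter_cons, hq, Bool.not_true, Bool.not_false, if_true, if_false,
          List.map_cons, List.sum_cons, ih, Bool.false_eq_true, ↓reduceIte] <;> abel

lemma main_GB (hord : IsMonomialOrder n) (H : Set (FreeAlg R n))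
    (hmon : ∀ g ∈ H, IsMonic g)
    (hd : ∀ g₁ ∈ H, ∀ g₂ ∈ H, ∀ w₁ s₁ w₂ s₂ : Word n,
      w₁ * LMon g₁ * s₁ = w₂ * LMon g₂ * s₂ →
      mono R w₁ * g₁ * mono R s₁ - mono R w₂ * g₂ * mono R s₂ ≠ 0 →
      BRep H (mono R w₁ * g₁ * mono R s₁ - mono R w₂ * g₂ * mono R s₂)
        (LMon (mono R w₁ * g₁ * mono R s₁ - mono R w₂ * g₂ * mono R s₂))) :
    ∀ (M : Word n) (f : FreeAlg R n), BRep H f M → f ≠ 0 →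
      ∃ g ∈ H, MDvd (LMon g) (LMon f) := by
  intro M
  induction M using WellFounded.induction (hord.1.wf) with
  | _ M IH =>
  rintro f ⟨l, hl1, hl2, hl3⟩ hne
  have hlne : l ≠ [] := by
    rintro rfl
    exact hne (by simpa using hl3.symm)
  -- the maximal top T
  have hsne : ((l.map atop).toFinset : Finset (Word n)).Nonempty := by
    obtain ⟨x, hx⟩ := List.exists_mem_of_ne_nil l hlne
    exact ⟨atop x, by rw [List.mem_toFinset]; exact List.mem_map_of_mem hx⟩
  set T : Word n := ((l.map atop).toFinset).max' hsne with hT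
  have hTmem : ∃ x ∈ l, atop x = T := by
    have := Finset.max'_mem _ hsne
    rw [List.mem_toFinset, List.mem_map] at this
    obtain ⟨x, hx, he⟩ := this
    exact ⟨x, hx, he⟩
  have hTle : ∀ x ∈ l, atop x ≤ T := by
    intro x hx
    exact Finset.le_max' _ _ (by rw [List.mem_toFinset]; exact List.mem_map_of_mem hx)
  have hTM : T ≤ M := by
    obtain ⟨x, hx, he⟩ := hTmem
    rw [← he]; exact hl2 x hx
  -- coefficient extraction
  have happ : ∀ u : Word n, f.coeff u = (l.map (fun x => (aval x).coeff u)).sum := by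
    intro u
    rw [← hl3, sum_apply_list, List.map_map]
    rfl
  have hg0 : ∀ x ∈ l, x.2.2.1 ≠ 0 := fun x hx => (hmon _ (hl1 x hx)).1
  have hsupf : ∀ u ∈ f.coeff.support, u ≤ T := by
    intro u hu
    have hu' : f.coeff u ≠ 0 := Finsupp.mem_support_iff.mp hu
    rw [happ u] at hu'
    have : ∃ x ∈ l, (aval x).coeff u ≠ 0 := by
      by_contra hc
      push_neg at hc
      exact hu' (List.sum_eq_zero (by
        intro y hy
        obtain ⟨x, hx, rfl⟩ := List.mem_map.mp hy
        exact hc x hx))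
    obtain ⟨x, hx, hxu⟩ := this
    exact le_trans (aval_support_le hord (hg0 x hx) (Finsupp.mem_support_iff.mpr hxu)) (hTle x hx)
  by_cases hfT : f.coeff T = 0
  · -- hard case: rewrite to smaller tops
    set l₁ : List (Atom R n) := l.filter (fun x => decide (atop x = T)) with hl₁def
    set l₂ : List (Atom R n) := l.filter (fun x => ! decide (atop x = T)) with hl₂def
    have hmem₁ : ∀ x ∈ l₁, x ∈ l ∧ atop x = T := by
      intro x hx
      have := List.mem_filter.mp hx
      exact ⟨this.1, of_decide_eq_true this.2⟩
    have hmem₂ : ∀ x ∈ l₂, x ∈ l ∧ atop x < T := by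
      intro x hx
      have h' := List.mem_filter.mp hx
      refine ⟨h'.1, lt_of_le_of_ne (hTle x h'.1) ?_⟩
      have := h'.2
      simp only [Bool.not_eq_true', decide_eq_false_iff_not] at this
      exact this
    have hsplit : f = (l₁.map aval).sum + (l₂.map aval).sum := by
      rw [← hl3, hl₁def, hl₂def]
      exact list_sum_filter_partition (fun x => decide (atop x = T)) l aval
    -- the sum of leading coefficients vanishes
    have hcoef : ((l₁.map (fun x => x.1)).sum : R) = 0 := by
      have h1 : f.coeff T = (l₁.map (fun x => (aval x).coeff T)).sum +
          (l₂.map (fun x => (aval x).coeff T)).sum := by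
        rw [happ T, hl₁def, hl₂def]
        exact list_sum_filter_partition (fun x => decide (atop x = T)) l (fun x => (aval x).coeff T)
      have h2 : (l₂.map (fun x => (aval x).coeff T)).sum = 0 := by
        apply List.sum_eq_zero
        intro y hy
        obtain ⟨x, hx, rfl⟩ := List.mem_map.mp hy
        exact aval_apply_of_lt hord (hg0 x (hmem₂ x hx).1) (hmem₂ x hx).2
      have h3 : (l₁.map (fun x => (aval x).coeff T)).sum = (l₁.map (fun x => x.1)).sum := by
        congr 1
        apply List.map_congr_left
        intro x hx
        rw [← (hmem₁ x hx).2, aval_apply_atop hord x (hg0 x (hmem₁ x hx).1),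
          (hmon _ (hl1 x (hmem₁ x hx).1)).2, mul_one]
      rw [h1, h2, h3, add_zero] at hfT
      exact hfT
    -- pick the distinguished element of l₁
    obtain ⟨x₀, hx₀l, hx₀T⟩ := hTmem
    have hx₀l₁ : x₀ ∈ l₁ := by
      rw [hl₁def, List.mem_filter]
      exact ⟨hx₀l, decide_eq_true hx₀T⟩
    -- rewrite the l₁ part
    have hsum₁ : (l₁.map aval).sum
        = (l₁.map (fun x => x.1 • (tval x - tval x₀))).sum := by
      have e1 : (l₁.map aval).sum = (l₁.map (fun x => x.1 • (tval x - tval x₀))).sum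
          + (l₁.map (fun x => x.1 • tval x₀)).sum := by
        rw [← list_sum_map_add]
        congr 1
        apply List.map_congr_left
        intro x hx
        rw [aval_eq_smul_tval, smul_sub, sub_add_cancel]
      have e2 : (l₁.map (fun x => x.1 • tval x₀)).sum = 0 := by
        rw [list_sum_smul_const, hcoef, zero_smul]
      rw [e1, e2, add_zero]
    -- each difference has a representation with strictly smaller tops
    have hdiff : ∀ x ∈ l₁, ∃ L : List (Atom R n),
        (∀ y ∈ L, y.2.2.1 ∈ H ∧ atop y < T) ∧
        (L.map aval).sum = x.1 • (tval x - tval x₀) := by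
      intro x hx
      obtain ⟨hxl, hxT⟩ := hmem₁ x hx
      by_cases hd0 : tval x - tval x₀ = 0
      · exact ⟨[], by simp, by simp [hd0]⟩
      · have htops : x.2.1 * LMon x.2.2.1 * x.2.2.2 = x₀.2.1 * LMon x₀.2.2.1 * x₀.2.2.2 := by
          rw [show x.2.1 * LMon x.2.2.1 * x.2.2.2 = atop x from rfl,
            show x₀.2.1 * LMon x₀.2.2.1 * x₀.2.2.2 = atop x₀ from rfl, hxT, hx₀T]
        have hrep := hd x.2.2.1 (hl1 x hxl) x₀.2.2.1 (hl1 x₀ hx₀l)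
          x.2.1 x.2.2.2 x₀.2.1 x₀.2.2.2 htops hd0
        -- LMon of the difference is < T
        have hdlt : LMon (tval x - tval x₀) < T := by
          apply LMon_lt hd0
          intro u hu
          have hsub := Finsupp.support_sub (f := (tval x).coeff) (g := (tval x₀).coeff) hu
          have hle : u ≤ T := by
            rcases Finset.mem_union.mp hsub with h' | h'
            · exact le_trans (tval_support_le hord (hg0 x hxl) h') (le_of_eq hxT)
            · exact le_trans (tval_support_le hord (hg0 x₀ hx₀l) h') (le_of_eq hx₀T)
          refine lt_of_le_of_ne hle ?_
          intro heq
          have c1 : (tval x).coeff T = 1 := by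
            rw [← hxT, tval_apply_atop hord, (hmon _ (hl1 x hxl)).2]
          have c2 : (tval x₀).coeff T = 1 := by
            rw [← hx₀T, tval_apply_atop hord, (hmon _ (hl1 x₀ hx₀l)).2]
          have hz : (tval x - tval x₀).coeff T = 0 := by
            rw [MonoidAlgebra.coeff_sub, Finsupp.sub_apply, c1, c2, sub_self]
          rw [heq] at hu
          exact (Finsupp.mem_support_iff.mp hu) hz
        obtain ⟨L, hL1, hL2, hL3⟩ := BRep.smul x.1 hrep
        refine ⟨L, ?_, hL3⟩
        intro y hy
        exact ⟨hL1 y hy, lt_of_le_of_lt (hL2 y hy) hdlt⟩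
    obtain ⟨L₁, hL₁1, hL₁2⟩ := list_rep_concat l₁ (fun x => x.1 • (tval x - tval x₀))
      (fun y => y.2.2.1 ∈ H ∧ atop y < T) hdiff
    set L : List (Atom R n) := L₁ ++ l₂ with hLdef
    have hLsum : (L.map aval).sum = f := by
      rw [hLdef, List.map_append, List.sum_append, hL₁2, ← hsum₁, ← hsplit]
    have hLmem : ∀ y ∈ L, y.2.2.1 ∈ H ∧ atop y < T := by
      intro y hy
      rcases List.mem_append.mp hy with h' | h'
      · exact hL₁1 y h'
      · exact ⟨hl1 y (hmem₂ y h').1, (hmem₂ y h').2⟩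
    have hLne : L ≠ [] := by
      rintro h0
      rw [h0] at hLsum
      exact hne (by simpa using hLsum.symm)
    -- new maximum
    have hsne' : ((L.map atop).toFinset : Finset (Word n)).Nonempty := by
      obtain ⟨x, hx⟩ := List.exists_mem_of_ne_nil L hLne
      exact ⟨atop x, by rw [List.mem_toFinset]; exact List.mem_map_of_mem hx⟩
    obtain ⟨x₁, hx₁L, hx₁e⟩ : ∃ x ∈ L, atop x = ((L.map atop).toFinset).max' hsne' := by
      have := Finset.max'_mem _ hsne'
      rw [List.mem_toFinset, List.mem_map] at this
      obtain ⟨x, hx, he⟩ := this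
      exact ⟨x, hx, he⟩
    refine IH (((L.map atop).toFinset).max' hsne') ?_ f
      ⟨L, fun y hy => (hLmem y hy).1, ?_, hLsum⟩ hne
    · exact lt_of_lt_of_le (hx₁e ▸ (hLmem x₁ hx₁L).2) hTM
    · intro x hx
      exact Finset.le_max' _ _ (by rw [List.mem_toFinset]; exact List.mem_map_of_mem hx)
  · -- easy case : LMon f = T
    have hTsup : T ∈ f.coeff.support := Finsupp.mem_support_iff.mpr hfT
    have hLf : LMon f = T := le_antisymm (LMon_le hne hsupf) (le_LMon hne hTsup)
    obtain ⟨x, hx, he⟩ := hTmem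
    exact ⟨x.2.2.1, hl1 x hx, x.2.1, x.2.2.2, by rw [hLf, ← he]; rfl⟩

end Main

section Incl
variable [LinearOrder (Word n)] (R' : Subring R)

lemma incl_apply (f : FreeAlg (↥R') n) (u : Word n) : (incl R' f).coeff u = (f.coeff u : R) :=
  Finsupp.mapRange_apply (hf := by simp)

lemma incl_injective : Function.Injective (incl R' (n := n)) := by
  intro f g h
  ext u
  have h1 : (incl R' f).coeff u = (incl R' g).coeff u := by rw [h]
  rw [incl_apply, incl_apply] at h1
  exact_mod_cast h1

lemma incl_zero : incl R' (0 : FreeAlg (↥R') n) = 0 := by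
  ext u
  simp [incl_apply]

lemma incl_eq_zero_iff {f : FreeAlg (↥R') n} : incl R' f = 0 ↔ f = 0 := by
  constructor
  · intro h
    apply incl_injective R'
    rw [h, incl_zero]
  · rintro rfl; exact incl_zero R'

lemma support_incl (f : FreeAlg (↥R') n) : (incl R' f).coeff.support = f.coeff.support :=
  Finsupp.support_mapRange_of_injective (by simp) f.coeff Subtype.coe_injective

lemma LMon_incl (f : FreeAlg (↥R') n) : LMon (incl R' f) = LMon f := by
  by_cases h : f = 0
  · rw [h, incl_zero]
    simp [LMon]
  · have h' : incl R' f ≠ 0 := fun hh => h ((incl_eq_zero_iff R').mp hh)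
    rw [LMon, LMon, dif_neg h, dif_neg h']
    have hs := support_incl R' f
    have h1 : (incl R' f).coeff.support.max'
        (Finsupp.support_nonempty_iff.mpr (mt MonoidAlgebra.coeff_eq_zero.mp h')) ∈
          f.coeff.support := by
      rw [← hs]; exact Finset.max'_mem _ _
    have h2 : f.coeff.support.max' (Finsupp.support_nonempty_iff.mpr
        (mt MonoidAlgebra.coeff_eq_zero.mp h)) ∈ (incl R' f).coeff.support := by
      rw [hs]; exact Finset.max'_mem _ _
    exact le_antisymm (Finset.le_max' _ _ h1) (Finset.le_max' _ _ h2)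

lemma LCoef_incl (f : FreeAlg (↥R') n) : LCoef (incl R' f) = ((LCoef f : ↥R') : R) := by
  show (incl R' f).coeff (LMon (incl R' f)) = (f.coeff (LMon f) : R)
  rw [LMon_incl R', incl_apply]

lemma IsMonic_incl_iff {f : FreeAlg (↥R') n} : IsMonic (incl R' f) ↔ IsMonic f := by
  constructor
  · rintro ⟨h1, h2⟩
    refine ⟨fun h0 => h1 (by rw [h0, incl_zero]), ?_⟩
    have h3 := h2
    rw [LCoef_incl] at h3
    exact_mod_cast h3
  · rintro ⟨h1, h2⟩
    refine ⟨fun h0 => h1 ((incl_eq_zero_iff R').mp h0), ?_⟩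
    rw [LCoef_incl, h2]
    simp

lemma incl_add (f g : FreeAlg (↥R') n) : incl R' (f + g) = incl R' f + incl R' g := by
  ext u
  rw [incl_apply, MonoidAlgebra.coeff_add, MonoidAlgebra.coeff_add, Finsupp.add_apply,
    Finsupp.add_apply, incl_apply, incl_apply]
  push_cast
  rfl

lemma incl_sub (f g : FreeAlg (↥R') n) : incl R' (f - g) = incl R' f - incl R' g := by
  ext u
  rw [incl_apply, MonoidAlgebra.coeff_sub, MonoidAlgebra.coeff_sub, Finsupp.sub_apply,
    Finsupp.sub_apply, incl_apply, incl_apply]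
  push_cast
  rfl

lemma incl_single (u : Word n) (c : ↥R') :
    incl R' (MonoidAlgebra.single u c) = MonoidAlgebra.single u (c : R) :=
  congrArg MonoidAlgebra.ofCoeff Finsupp.mapRange_single

lemma incl_mul (f g : FreeAlg (↥R') n) : incl R' (f * g) = incl R' f * incl R' g := by
  induction f using MonoidAlgebra.induction_linear with
  | zero => rw [zero_mul, incl_zero, zero_mul]
  | add p q hp hq => rw [add_mul, incl_add, hp, hq, incl_add, add_mul]
  | single u c =>
      induction g using MonoidAlgebra.induction_linear with
      | zero => rw [mul_zero, incl_zero, mul_zero]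

      | add p q hp hq => rw [mul_add, incl_add, hp, hq, incl_add, mul_add]
      | single v d =>
          rw [MonoidAlgebra.single_mul_single, incl_single, incl_single, incl_single,
            MonoidAlgebra.single_mul_single]
          push_cast
          rfl

lemma incl_smul (c : ↥R') (f : FreeAlg (↥R') n) :
    incl R' (c • f) = (c : R) • incl R' f := by
  ext u
  rw [incl_apply, MonoidAlgebra.coeff_smul, Finsupp.smul_apply, MonoidAlgebra.coeff_smul,
    Finsupp.smul_apply, incl_apply, smul_eq_mul,
    smul_eq_mul]
  push_cast
  rfl

lemma incl_mono (w : Word n) : incl R' (mono (↥R') w) = mono R w := by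
  rw [mono_def, mono_def, incl_single]
  norm_num

def mapAtom (x : Atom (↥R') n) : Atom R n := ((x.1 : R), x.2.1, incl R' x.2.2.1, x.2.2.2)

lemma incl_aval (x : Atom (↥R') n) : incl R' (aval x) = aval (mapAtom R' x) := by
  obtain ⟨c, w, g, s⟩ := x
  show incl R' (c • (mono (↥R') w * g * mono (↥R') s))
      = (c : R) • (mono R w * incl R' g * mono R s)
  rw [incl_smul, incl_mul, incl_mul, incl_mono, incl_mono]

lemma atop_mapAtom (x : Atom (↥R') n) : atop (mapAtom R' x) = atop x := by
  obtain ⟨c, w, g, s⟩ := x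
  show w * LMon (incl R' g) * s = w * LMon g * s
  rw [LMon_incl]

lemma incl_list_sum (l : List (Atom (↥R') n)) :
    incl R' ((l.map aval).sum) = ((l.map (fun x => aval (mapAtom R' x))).sum) := by
  induction l with
  | nil => simp [incl_zero]
  | cons b l ih =>
      simp only [List.map_cons, List.sum_cons, incl_add, ih, incl_aval]

lemma RepU.incl {G : Set (FreeAlg (↥R') n)} {f : FreeAlg (↥R') n} (h : RepU G f) :
    RepU ((incl R') '' G) (incl R' f) := by
  obtain ⟨l, h1, h2⟩ := h
  refine ⟨l.map (mapAtom R'), ?_, ?_⟩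
  · intro x hx
    obtain ⟨y, hy, rfl⟩ := List.mem_map.mp hx
    exact ⟨y.2.2.1, h1 y hy, rfl⟩
  · rw [List.map_map, ← h2, incl_list_sum]
    rfl

lemma BRep.incl {G : Set (FreeAlg (↥R') n)} {f : FreeAlg (↥R') n} {M : Word n}
    (h : BRep G f M) : BRep ((incl R') '' G) (incl R' f) M := by
  obtain ⟨l, h1, h2, h3⟩ := h
  refine ⟨l.map (mapAtom R'), ?_, ?_, ?_⟩
  · intro x hx
    obtain ⟨y, hy, rfl⟩ := List.mem_map.mp hx
    exact ⟨y.2.2.1, h1 y hy, rfl⟩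
  · intro x hx
    obtain ⟨y, hy, rfl⟩ := List.mem_map.mp hx
    rw [atop_mapAtom]
    exact h2 y hy
  · rw [List.map_map, ← h3, incl_list_sum]
    rfl

lemma RepU.exists_brep {H : Set (FreeAlg R n)} {f : FreeAlg R n} (h : RepU H f)
    (hne : f ≠ 0) : ∃ M : Word n, BRep H f M := by
  obtain ⟨l, h1, h2⟩ := h
  have hlne : l ≠ [] := by
    rintro rfl
    exact hne (by simpa using h2.symm)
  have hsne : ((l.map atop).toFinset : Finset (Word n)).Nonempty := by
    obtain ⟨x, hx⟩ := List.exists_mem_of_ne_nil l hlne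
    exact ⟨atop x, by rw [List.mem_toFinset]; exact List.mem_map_of_mem hx⟩
  refine ⟨((l.map atop).toFinset).max' hsne, l, h1, ?_, h2⟩
  intro x hx
  exact Finset.le_max' _ _ (by rw [List.mem_toFinset]; exact List.mem_map_of_mem hx)

end Incl

/-- For a subring `R' ⊆ R` and `G ⊆ R'⟨X⟩`: `G` is an LM-reduced monic
Gröbner basis of `⟨G⟩` in `R'⟨X⟩` iff its image is an LM-reduced monic Gröbner basis of
the ideal it generates in `R⟨X⟩`, with respect to the same monomial ordering. -/
theorem monicGB_subring_iff [LinearOrder (Word n)] (hord : IsMonomialOrder n)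
    (R' : Subring R) (G : Set (FreeAlg (↥R') n)) :
    (LMReduced G ∧ IsMonicGB G (TwoSidedIdeal.span G)) ↔
      (LMReduced (incl R' '' G) ∧
        IsMonicGB (incl R' '' G) (TwoSidedIdeal.span (incl R' '' G))) := by
  constructor
  · rintro ⟨hred, hmon, hGB⟩
    have hGB' : ∀ f : FreeAlg (↥R') n, RepU G f → f ≠ 0 →
        ∃ g ∈ G, MDvd (LMon g) (LMon f) :=
      fun f hf hne => hGB f (repU_iff_mem_span.mp hf) hne
    have hmon' : ∀ g ∈ incl R' '' G, IsMonic g := by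
      rintro a ⟨g, hg, rfl⟩
      exact (IsMonic_incl_iff R').mpr (hmon g hg)
    refine ⟨?_, hmon', ?_⟩
    · rintro a ⟨g, hg, rfl⟩ b ⟨g', hg', rfl⟩ hne
      have hne' : g ≠ g' := by rintro rfl; exact hne rfl
      rw [LMon_incl R', LMon_incl R']
      exact hred g hg g' hg' hne'
    · intro f hf hne
      have hfr : RepU (incl R' '' G) f := repU_iff_mem_span.mpr hf
      obtain ⟨M, hM⟩ := hfr.exists_brep hne
      refine main_GB hord (incl R' '' G) hmon' ?_ M f hM hne
      rintro g₁ ⟨a, ha, rfl⟩ g₂ ⟨b, hb, rfl⟩ w₁ s₁ w₂ s₂ htop hdne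
      have hda : mono R w₁ * incl R' a * mono R s₁ - mono R w₂ * incl R' b * mono R s₂
          = incl R' (mono (↥R') w₁ * a * mono (↥R') s₁ -
              mono (↥R') w₂ * b * mono (↥R') s₂) := by
        rw [incl_sub, incl_mul, incl_mul, incl_mul, incl_mul, incl_mono, incl_mono,
          incl_mono, incl_mono]
      set d' : FreeAlg (↥R') n := mono (↥R') w₁ * a * mono (↥R') s₁ -
          mono (↥R') w₂ * b * mono (↥R') s₂ with hd'
      have hd'ne : d' ≠ 0 := by
        rintro h0
        rw [hda, h0, incl_zero] at hdne
        exact hdne rfl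
      have hd'rep : RepU G d' := by
        refine ⟨[(1, w₁, a, s₁), (-1, w₂, b, s₂)], ?_, ?_⟩
        · intro x hx
          simp only [List.mem_cons, List.not_mem_nil, or_false] at hx
          rcases hx with rfl | rfl
          · exact ha
          · exact hb
        · simp only [List.map_cons, List.map_nil, List.sum_cons, List.sum_nil, add_zero]
          rw [aval_eq_smul_tval, aval_eq_smul_tval]
          show (1 : ↥R') • (mono (↥R') w₁ * a * mono (↥R') s₁)
              + (-1 : ↥R') • (mono (↥R') w₂ * b * mono (↥R') s₂) = d'
          rw [one_smul, neg_smul, one_smul, hd', sub_eq_add_neg]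
      have hbrep := div_rep hord G hmon hGB' d' hd'rep hd'ne
      rw [hda, show LMon (incl R' d') = LMon d' from LMon_incl R' d']
      exact hbrep.incl R'
  · rintro ⟨hred, hmon, hGB⟩
    refine ⟨?_, ?_, ?_⟩
    · intro g hg g' hg' hne
      have h1 : incl R' g ≠ incl R' g' := fun h => hne (incl_injective R' h)
      have h2 := hred _ ⟨g, hg, rfl⟩ _ ⟨g', hg', rfl⟩ h1
      rwa [LMon_incl R', LMon_incl R'] at h2
    · intro g hg
      exact (IsMonic_incl_iff R').mp (hmon _ ⟨g, hg, rfl⟩)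
    · intro f hf hne
      have hfr : RepU G f := repU_iff_mem_span.mpr hf
      have h2 : incl R' f ∈ TwoSidedIdeal.span (incl R' '' G) :=
        repU_iff_mem_span.mp (hfr.incl R')
      have h3 : incl R' f ≠ 0 := fun h => hne ((incl_eq_zero_iff R').mp h)
      obtain ⟨h, ⟨g, hg, rfl⟩, w, s, hws⟩ := hGB _ h2 h3
      rw [LMon_incl R', LMon_incl R'] at hws
      exact ⟨g, hg, w, s, hws⟩
end
end

section
/- Let R be a commutative ring, ≺ a monomial ordering on the standard monomial basis B of R⟨X₁,…,Xₙ⟩, and I an ideal of R⟨X₁,…,Xₙ⟩. Suppose I contains a monic subset G = {g_{ji} : 1 ≤ i < j ≤ n} of n(n−1)/2 elements with LM(g_{ji}) = X_j X_i for all 1 ≤ i < j ≤ n. Then the following are equivalent: (1) the canonical images of the ordered monomials X₁^{α₁} X₂^{α₂} ⋯ Xₙ^{αₙ} (α₁,…,αₙ ∈ ℕ) in A = R⟨X₁,…,Xₙ⟩/I form a free R-basis of A (a PBW R-basis); (2) every monic subset 𝒢 of I with G ⊆ 𝒢 is a monic Gröbner basis of I with respect to ≺. -/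
noncomputable section
open MonoidAlgebra
open scoped Classical

variable {R : Type} [CommRing R] {n : ℕ}

/-- The underlying `R`-submodule of a two-sided ideal of the free algebra. -/
def idealSubmodule (I : TwoSidedIdeal (FreeAlg R n)) : Submodule R (FreeAlg R n) :=
  Submodule.restrictScalars R (TwoSidedIdeal.asIdeal I)

/-- The canonical images of the words in `S` form a free `R`-basis of the quotient of the
free algebra by the two-sided ideal `I` (equivalently, they are `R`-linearly independent
and span the quotient). -/
def ImageFreeBasis (I : TwoSidedIdeal (FreeAlg R n)) (S : Set (Word n)) : Prop :=
  LinearIndependent R (fun u : S => (idealSubmodule I).mkQ (mono R (u : Word n))) ∧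
  Submodule.span R
    (Set.range fun u : S => (idealSubmodule I).mkQ (mono R (u : Word n))) = ⊤

/-- The ordered monomial `X_1^(α 1) * X_2^(α 2) * ... * X_n^(α n)` as a word. -/
def ordWord {n : ℕ} (α : Fin n → ℕ) : Word n :=
  (List.ofFn fun i => FreeMonoid.of i ^ α i).prod

/-- The images of the ordered monomials `X_1^(α 1) ⋯ X_n^(α n)` form a free `R`-basis
(a PBW `R`-basis) of `R⟨X⟩/I`. -/
def HasPBWBasis (I : TwoSidedIdeal (FreeAlg R n)) : Prop :=
  LinearIndependent R
    (fun α : Fin n → ℕ => (idealSubmodule I).mkQ (mono R (ordWord α))) ∧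
  Submodule.span R
    (Set.range fun α : Fin n → ℕ => (idealSubmodule I).mkQ (mono R (ordWord α))) = ⊤

namespace PBWAux
open FreeMonoid List

variable {n : ℕ}

lemma toList_pow_of (i : Fin n) (k : ℕ) :
    FreeMonoid.toList (FreeMonoid.of i ^ k) = List.replicate k i := by
  induction k with
  | zero => rfl
  | succ k ih => rw [pow_succ, FreeMonoid.toList_mul, ih, FreeMonoid.toList_of,
      List.replicate_succ' (n := k) (a := i)]

lemma toList_prod {β : Type*} (l : List (FreeMonoid β)) :
    FreeMonoid.toList l.prod = (l.map FreeMonoid.toList).flatten := by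
  induction l with
  | nil => rfl
  | cons a l ih => rw [List.prod_cons, FreeMonoid.toList_mul, ih, List.map_cons,
      List.flatten_cons]

lemma ordWord_toList (α : Fin n → ℕ) :
    FreeMonoid.toList (ordWord α) = (List.ofFn fun i => List.replicate (α i) i).flatten := by
  rw [ordWord, toList_prod, List.map_ofFn]
  exact congrArg (fun l => List.flatten l)
    (congrArg List.ofFn (funext fun i => toList_pow_of i (α i)))

lemma ordWord_sorted (α : Fin n → ℕ) :
    List.Pairwise (· ≤ ·) (FreeMonoid.toList (ordWord α)) := by
  rw [ordWord_toList, List.pairwise_flatten]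
  constructor
  · intro l hl
    rw [List.mem_ofFn] at hl
    obtain ⟨i, rfl⟩ := hl
    exact List.pairwise_replicate.2 (Or.inr le_rfl)
  · rw [List.pairwise_ofFn]
    intro i j hij x hx y hy
    rw [List.eq_of_mem_replicate hx, List.eq_of_mem_replicate hy]
    exact hij.le

lemma count_ordWord (α : Fin n → ℕ) (k : Fin n) :
    List.count k (FreeMonoid.toList (ordWord α)) = α k := by
  rw [ordWord_toList, List.count_flatten, List.map_ofFn, List.sum_ofFn]
  have : ∀ i : Fin n, (List.count k ∘ fun i => List.replicate (α i) i) i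
      = if i = k then α i else 0 := by
    intro i
    simp [List.count_replicate]
  rw [Finset.sum_congr rfl fun i _ => this i, Finset.sum_ite_eq' Finset.univ k fun i => α i]
  simp

lemma ordWord_injective : Function.Injective (ordWord (n := n)) := by
  intro α β h
  funext k
  rw [← count_ordWord α k, ← count_ordWord β k, h]

lemma sorted_mem_range {w : Word n} (h : List.Pairwise (· ≤ ·) (FreeMonoid.toList w)) :
    w ∈ Set.range (ordWord (n := n)) := by
  refine ⟨fun i => List.count i (FreeMonoid.toList w), ?_⟩
  apply FreeMonoid.toList.injective
  refine List.Perm.eq_of_pairwise' (ordWord_sorted _) h (List.perm_iff_count.2 fun a => ?_)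
  exact count_ordWord _ a

lemma not_sorted_decomp {l : List (Fin n)} (h : ¬ List.Pairwise (· ≤ ·) l) :
    ∃ (a : List (Fin n)) (j i : Fin n) (b : List (Fin n)), l = a ++ j :: i :: b ∧ i < j := by
  induction l with
  | nil => exact absurd List.Pairwise.nil h
  | cons x t ih =>
    match t, ih with
    | [], _ => exact absurd (List.pairwise_singleton _ _) h
    | y :: t, ih =>
      by_cases hxy : x ≤ y
      · rw [← List.isChain_iff_pairwise, List.isChain_cons_cons] at h
        push_neg at h
        obtain ⟨a, j, i, b, heq, hij⟩ := ih (by rw [← List.isChain_iff_pairwise]; exact h hxy)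
        exact ⟨x :: a, j, i, b, by rw [List.cons_append, heq], hij⟩
      · exact ⟨[], x, y, t, rfl, lt_of_not_ge hxy⟩

lemma not_sorted_of_dvd {u : Word n} {i j : Fin n} (hij : i < j)
    (h : MDvd (FreeMonoid.of j * FreeMonoid.of i) u) :
    ¬ List.Pairwise (· ≤ ·) (FreeMonoid.toList u) := by
  obtain ⟨w, s, rfl⟩ := h
  intro hp
  have hsub : [j, i].Sublist (FreeMonoid.toList (w * (FreeMonoid.of j * FreeMonoid.of i) * s)) := by
    simp only [FreeMonoid.toList_mul, FreeMonoid.toList_of, List.append_assoc,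
      List.singleton_append]
    exact List.Sublist.trans (((List.nil_sublist _).cons₂ i).cons₂ j)
      (List.sublist_append_right _ _)
  have := (hp.sublist hsub)
  rw [List.pairwise_cons] at this
  exact absurd (this.1 i (List.mem_singleton_self i)) (not_le.2 hij)

end PBWAux
namespace PBWAux
open scoped Pointwise

variable {R : Type} [CommRing R] {n : ℕ} [LinearOrder (Word n)]

lemma LMon_mem {f : FreeAlg R n} (hf : f ≠ 0) : LMon f ∈ f.coeff.support := by
  rw [LMon, dif_neg hf]; exact Finset.max'_mem _ _

lemma le_LMon {f : FreeAlg R n} (hf : f ≠ 0) {v : Word n} (hv : v ∈ f.coeff.support) :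
    v ≤ LMon f := by
  rw [LMon, dif_neg hf]; exact Finset.le_max' _ _ hv

lemma LMon_lt {f : FreeAlg R n} {u : Word n} (hf : f ≠ 0)
    (hb : ∀ v ∈ f.coeff.support, v < u) : LMon f < u := hb _ (LMon_mem hf)

lemma mono_def (w : Word n) : mono R w = MonoidAlgebra.single w (1 : R) := rfl

lemma mono_mul (a b : Word n) : mono R a * mono R b = mono R (a * b) :=
  (map_mul (MonoidAlgebra.of R (Word n)) a b).symm

lemma mem_support_sandwich {a b : Word n} {h : FreeAlg R n} {u : Word n}
    (hu : u ∈ (mono R a * h * mono R b).coeff.support) : ∃ v ∈ h.coeff.support, u = a * v * b := by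
  classical
  have h1 : (mono R a * h * mono R b).coeff.support ⊆
      (mono R a).coeff.support * h.coeff.support * (mono R b).coeff.support :=
    (MonoidAlgebra.support_coeff_mul_subset _ _).trans
      (Finset.mul_subset_mul_right (MonoidAlgebra.support_coeff_mul_subset _ _))
  have := h1 hu
  rw [Finset.mem_mul] at this
  obtain ⟨x, hx, y, hy, rfl⟩ := this
  rw [Finset.mem_mul] at hx
  obtain ⟨p, hp, v, hv, rfl⟩ := hx
  have hpa : p = a := Finset.mem_singleton.1 (Finsupp.support_single_subset hp)
  have hyb : y = b := Finset.mem_singleton.1 (Finsupp.support_single_subset hy)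
  exact ⟨v, hv, by rw [hpa, hyb]⟩

lemma mem_idealSubmodule {I : TwoSidedIdeal (FreeAlg R n)} {x : FreeAlg R n} :
    x ∈ idealSubmodule I ↔ x ∈ I := by
  rw [idealSubmodule, Submodule.restrictScalars_mem, TwoSidedIdeal.mem_asIdeal]

lemma smul_mem_ideal {I : TwoSidedIdeal (FreeAlg R n)} {x : FreeAlg R n} (c : R)
    (hx : x ∈ I) : c • x ∈ I := by
  rw [Algebra.smul_def]
  exact I.mul_mem_left _ _ hx

end PBWAux
namespace PBWAux

variable {R : Type} [CommRing R] {n : ℕ} [LinearOrder (Word n)]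

lemma tail_lt {f : FreeAlg R n} (hf : f ≠ 0) {v : Word n}
    (hv : v ∈ (f - (f.coeff (LMon f)) • mono R (LMon f)).coeff.support) : v < LMon f := by
  classical
  have hne : v ≠ LMon f := by
    intro h
    rw [Finsupp.mem_support_iff, h, MonoidAlgebra.coeff_sub, Finsupp.sub_apply,
      MonoidAlgebra.coeff_smul, Finsupp.smul_apply, mono_def, MonoidAlgebra.coeff_single,
      Finsupp.single_eq_same, smul_eq_mul, mul_one, sub_self] at hv
    exact hv rfl
  have hmem : v ∈ f.coeff.support := by
    rw [Finsupp.mem_support_iff] at hv ⊢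
    intro h0
    apply hv
    rw [MonoidAlgebra.coeff_sub, Finsupp.sub_apply, MonoidAlgebra.coeff_smul,
      Finsupp.smul_apply, mono_def, MonoidAlgebra.coeff_single, Finsupp.single_eq_of_ne'
      (Ne.symm hne), smul_eq_mul, mul_zero, h0, sub_zero]
  exact lt_of_le_of_ne (le_LMon hf hmem) hne

lemma g_tail_lt {f : FreeAlg R n} (hmonic : IsMonic f) {v : Word n}
    (hv : v ∈ (f - mono R (LMon f)).coeff.support) : v < LMon f := by
  have : f - mono R (LMon f) = f - (f.coeff (LMon f)) • mono R (LMon f) := by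
    rw [show f.coeff (LMon f) = (1 : R) from hmonic.2, one_smul]
  rw [this] at hv
  exact tail_lt hmonic.1 hv

lemma reduce (hord : IsMonomialOrder n) (I : TwoSidedIdeal (FreeAlg R n))
    (g : Fin n → Fin n → FreeAlg R n)
    (hmem : ∀ i j : Fin n, i < j → g j i ∈ I)
    (hmonic : ∀ i j : Fin n, i < j → IsMonic (g j i))
    (hlm : ∀ i j : Fin n, i < j → LMon (g j i) = FreeMonoid.of j * FreeMonoid.of i)
    (w : Word n) :
    ∀ h : FreeAlg R n, (∀ v ∈ h.coeff.support, v ≤ w) →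
      ∃ r : FreeAlg R n, h - r ∈ I ∧
        ∀ v ∈ r.coeff.support, v ∈ Set.range (ordWord (n := n)) ∧ v ≤ w := by
  classical
  induction w using WellFounded.induction (r := (· < ·)) hord.1.wf with
  | _ w IH =>
  intro h hsupp
  by_cases hh : h = 0
  · exact ⟨0, by rw [hh, sub_zero]; exact I.zero_mem, by simp⟩
  set u := LMon h with hu_def
  set c := h.coeff u with hc_def
  have hc : c ≠ 0 := Finsupp.mem_support_iff.1 (LMon_mem hh)
  have hu : u ≤ w := hsupp _ (LMon_mem hh)
  -- helper: reduce anything supported strictly below `u`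
  have step : ∀ h' : FreeAlg R n, (∀ v ∈ h'.coeff.support, v < u) →
      ∃ r' : FreeAlg R n, h' - r' ∈ I ∧
        ∀ v ∈ r'.coeff.support, v ∈ Set.range (ordWord (n := n)) ∧ v < u := by
    intro h' hs'
    by_cases hh' : h' = 0
    · exact ⟨0, by rw [hh', sub_zero]; exact I.zero_mem, by simp⟩
    · have hlt : LMon h' < w := lt_of_lt_of_le (LMon_lt hh' hs') hu
      obtain ⟨r', hr1, hr2⟩ := IH (LMon h') hlt h' (fun v hv => le_LMon hh' hv)
      exact ⟨r', hr1, fun v hv => ⟨(hr2 v hv).1,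
        lt_of_le_of_lt (hr2 v hv).2 (LMon_lt hh' hs')⟩⟩
  by_cases hsort : List.Pairwise (· ≤ ·) (FreeMonoid.toList u)
  · -- sorted leading monomial: keep it
    obtain ⟨r', hr1, hr2⟩ := step (h - c • mono R u) (fun v hv => tail_lt hh hv)
    refine ⟨c • mono R u + r', ?_, ?_⟩
    · rw [sub_add_eq_sub_sub]; exact hr1
    · intro v hv
      rcases Finset.mem_union.1 (Finsupp.support_add hv) with hv1 | hv1
      · have hv2 : v = u := by
          have := Finsupp.support_smul hv1
          rw [mono_def] at this
          exact Finset.mem_singleton.1 (Finsupp.support_single_subset this)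
        rw [hv2]
        exact ⟨sorted_mem_range hsort, hu⟩
      · exact ⟨(hr2 v hv1).1, le_of_lt (lt_of_lt_of_le (hr2 v hv1).2 hu)⟩
  · -- unsorted: the leading monomial contains a descent X_j X_i
    obtain ⟨a, j, i, b, hdecomp, hij⟩ := not_sorted_decomp hsort
    have hu_eq : u = FreeMonoid.ofList a * (FreeMonoid.of j * FreeMonoid.of i) *
        FreeMonoid.ofList b := by
      apply FreeMonoid.toList.injective
      simp only [FreeMonoid.toList_mul, FreeMonoid.toList_of, FreeMonoid.toList_ofList]
      rw [hdecomp]; simp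
    set A := FreeMonoid.ofList a
    set Bw := FreeMonoid.ofList b
    set ji := FreeMonoid.of j * FreeMonoid.of i with hji_def
    set t : FreeAlg R n := g j i - mono R ji with ht_def
    have ht_supp : ∀ v ∈ t.coeff.support, v < ji := by
      intro v hv
      have hv' : v ∈ (g j i - mono R (LMon (g j i))).coeff.support := by
        rw [hlm i j hij]; exact hv
      have := g_tail_lt (hmonic i j hij) hv'
      rwa [hlm i j hij] at this
    have hp_mem : c • (mono R A * g j i * mono R Bw) ∈ I :=
      smul_mem_ideal c (I.mul_mem_right _ _ (I.mul_mem_left _ _ (hmem i j hij)))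
    set h' : FreeAlg R n := h - c • (mono R A * g j i * mono R Bw) with hh'_def
    have hsplit : h' = (h - c • mono R u) - c • (mono R A * t * mono R Bw) := by
      rw [hh'_def, ht_def]
      have : mono R A * (g j i) * mono R Bw
          = mono R u + mono R A * (g j i - mono R ji) * mono R Bw := by
        rw [mul_sub, sub_mul, mono_mul, mono_mul, ← hu_eq, add_sub_cancel]
      rw [this, smul_add, sub_add_eq_sub_sub]
    have hs' : ∀ v ∈ h'.coeff.support, v < u := by
      intro v hv
      rw [hsplit] at hv
      rcases Finset.mem_union.1 (Finsupp.support_sub hv) with hv1 | hv1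
      · exact tail_lt hh hv1
      · obtain ⟨v', hv', rfl⟩ := mem_support_sandwich (Finsupp.support_smul hv1)
        have := hord.2 A v' ji Bw (ht_supp v' hv')
        rwa [← hu_eq] at this
    obtain ⟨r', hr1, hr2⟩ := step h' hs'
    refine ⟨r', ?_, fun v hv => ⟨(hr2 v hv).1, le_of_lt (lt_of_lt_of_le (hr2 v hv).2 hu)⟩⟩
    have : h - r' = c • (mono R A * g j i * mono R Bw) + (h' - r') := by
      rw [hh'_def]; abel
    rw [this]
    exact I.add_mem hp_mem hr1

end PBWAux
namespace PBWAux

variable {R : Type} [CommRing R] {n : ℕ} [LinearOrder (Word n)]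

lemma key_lincomb (I : TwoSidedIdeal (FreeAlg R n)) (l : (Fin n → ℕ) →₀ R) :
    Finsupp.linearCombination R
        (fun α : Fin n → ℕ => (idealSubmodule I).mkQ (mono R (ordWord α))) l
      = (idealSubmodule I).mkQ (MonoidAlgebra.ofCoeff (Finsupp.mapDomain ordWord l)) := by
  classical
  rw [Finsupp.linearCombination_apply, Finsupp.mapDomain, MonoidAlgebra.ofCoeff_finsuppSum, map_finsuppSum]
  refine Finsupp.sum_congr fun α _ => ?_
  rw [← map_smul]
  congr 1
  rw [mono_def, MonoidAlgebra.smul_single', mul_one, MonoidAlgebra.ofCoeff_single]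

lemma linIndep_iff (I : TwoSidedIdeal (FreeAlg R n)) :
    LinearIndependent R
        (fun α : Fin n → ℕ => (idealSubmodule I).mkQ (mono R (ordWord α)))
      ↔ ∀ h : FreeAlg R n, h ∈ I → ↑h.coeff.support ⊆ Set.range (ordWord (n := n)) → h = 0 := by
  classical
  rw [linearIndependent_iff]
  constructor
  · intro hli h hI hsupp
    set l := Finsupp.comapDomain ordWord h.coeff (ordWord_injective.injOn) with hl
    have hmap : MonoidAlgebra.ofCoeff (Finsupp.mapDomain ordWord l) = h :=
      congrArg MonoidAlgebra.ofCoeff (Finsupp.mapDomain_comapDomain ordWord ordWord_injective h.coeff hsupp)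
    have : l = 0 := by
      apply hli
      rw [key_lincomb, hmap, Submodule.mkQ_apply, Submodule.Quotient.mk_eq_zero,
        mem_idealSubmodule]
      exact hI
    rw [← hmap, this, Finsupp.mapDomain_zero, MonoidAlgebra.ofCoeff_zero]
  · intro hprop l hl
    rw [key_lincomb, Submodule.mkQ_apply, Submodule.Quotient.mk_eq_zero,
      mem_idealSubmodule] at hl
    have hsupp : ↑(MonoidAlgebra.ofCoeff (Finsupp.mapDomain ordWord l)).coeff.support ⊆ Set.range (ordWord (n := n)) := by
      intro v hv
      have := Finsupp.mapDomain_support (f := ordWord) (s := l) hv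
      rw [Finset.mem_image] at this
      obtain ⟨α, _, rfl⟩ := this
      exact ⟨α, rfl⟩
    have := hprop _ hl hsupp
    exact Finsupp.mapDomain_injective ordWord_injective (by
      have := congrArg MonoidAlgebra.coeff this; rw [Finsupp.mapDomain_zero]; exact this)

lemma span_top (hord : IsMonomialOrder n) (I : TwoSidedIdeal (FreeAlg R n))
    (g : Fin n → Fin n → FreeAlg R n)
    (hmem : ∀ i j : Fin n, i < j → g j i ∈ I)
    (hmonic : ∀ i j : Fin n, i < j → IsMonic (g j i))
    (hlm : ∀ i j : Fin n, i < j → LMon (g j i) = FreeMonoid.of j * FreeMonoid.of i) :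
    Submodule.span R
      (Set.range fun α : Fin n → ℕ => (idealSubmodule I).mkQ (mono R (ordWord α))) = ⊤ := by
  classical
  rw [eq_top_iff]
  rintro x -
  obtain ⟨f, rfl⟩ := (idealSubmodule I).mkQ_surjective x
  by_cases hf : f = 0
  · rw [hf, map_zero]; exact Submodule.zero_mem _
  obtain ⟨r, hrI, hr⟩ := reduce hord I g hmem hmonic hlm (LMon f) f (fun v hv => le_LMon hf hv)
  have heq : (idealSubmodule I).mkQ f = (idealSubmodule I).mkQ r := by
    rw [Submodule.mkQ_apply, Submodule.mkQ_apply, Submodule.Quotient.eq,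
      mem_idealSubmodule]
    exact hrI
  rw [heq]
  have : r = r.coeff.sum fun v c => c • mono R v := by
    conv_lhs => rw [← MonoidAlgebra.sum_coeff_single r]
    exact Finsupp.sum_congr fun v _ => by rw [mono_def, MonoidAlgebra.smul_single', mul_one]
  rw [this, map_finsuppSum]
  refine Submodule.sum_mem _ fun v hv => ?_
  show (idealSubmodule I).mkQ (r.coeff v • mono R v) ∈ _
  rw [map_smul]
  refine Submodule.smul_mem _ _ (Submodule.subset_span ?_)
  obtain ⟨α, rfl⟩ := (hr v hv).1
  exact ⟨α, rfl⟩

end PBWAux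
/-- Suppose `I` contains monic elements `g j i` (`i < j`) with
`LM(g j i) = X_j X_i`. Then `R⟨X⟩/I` has a PBW `R`-basis iff every monic subset of `I`
containing all the `g j i` is a monic Gröbner basis of `I`. -/
theorem pbwBasis_iff_monicGB [LinearOrder (Word n)] (hord : IsMonomialOrder n)
    (I : TwoSidedIdeal (FreeAlg R n)) (g : Fin n → Fin n → FreeAlg R n)
    (hmem : ∀ i j : Fin n, i < j → g j i ∈ I)
    (hmonic : ∀ i j : Fin n, i < j → IsMonic (g j i))
    (hlm : ∀ i j : Fin n, i < j → LMon (g j i) = FreeMonoid.of j * FreeMonoid.of i) :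
    HasPBWBasis I ↔
      ∀ 𝒢 : Set (FreeAlg R n), (∀ x ∈ 𝒢, x ∈ I) → (∀ h ∈ 𝒢, IsMonic h) →
        {x | ∃ i j : Fin n, i < j ∧ x = g j i} ⊆ 𝒢 → IsMonicGB 𝒢 I := by
  classical
  constructor
  · -- PBW basis ⟹ every such 𝒢 is a Gröbner basis
    intro hpbw 𝒢 h𝒢I h𝒢monic h𝒢sub
    refine ⟨h𝒢monic, ?_⟩
    intro f hf hf0
    by_cases hsort : List.Pairwise (· ≤ ·) (FreeMonoid.toList (LMon f))
    · -- impossible: a nonzero element of I cannot have a sorted leading monomial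
      exfalso
      have hNo := (PBWAux.linIndep_iff I).1 hpbw.1
      set u := LMon f with hu_def
      set c := f.coeff u with hc_def
      have hc : c ≠ 0 := Finsupp.mem_support_iff.1 (PBWAux.LMon_mem hf0)
      set tail : FreeAlg R n := f - c • mono R u with htail_def
      have htail_lt : ∀ v ∈ tail.coeff.support, v < u := fun v hv => PBWAux.tail_lt hf0 hv
      -- reduce the tail to a combination of ordered monomials strictly below u
      obtain ⟨r, hrI, hrsupp⟩ : ∃ r : FreeAlg R n, tail - r ∈ I ∧
          ∀ v ∈ r.coeff.support, v ∈ Set.range (ordWord (n := n)) ∧ v < u := by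
        by_cases htz : tail = 0
        · exact ⟨0, by rw [htz, sub_zero]; exact I.zero_mem, by simp⟩
        · obtain ⟨r, h1, h2⟩ := PBWAux.reduce hord I g hmem hmonic hlm (LMon tail) tail
            (fun v hv => PBWAux.le_LMon htz hv)
          exact ⟨r, h1, fun v hv => ⟨(h2 v hv).1,
            lt_of_le_of_lt (h2 v hv).2 (PBWAux.LMon_lt htz htail_lt)⟩⟩
      set f' : FreeAlg R n := c • mono R u + r with hf'_def
      have hf'I : f' ∈ I := by
        have : f' = f - (tail - r) := by rw [hf'_def, htail_def]; abel
        rw [this]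
        exact I.sub_mem hf hrI
      have hf'supp : ↑f'.coeff.support ⊆ Set.range (ordWord (n := n)) := by
        intro v hv
        rcases Finset.mem_union.1 (Finsupp.support_add hv) with hv1 | hv1
        · have hvu : v = u := Finset.mem_singleton.1
            (Finsupp.support_single_subset (by
              rw [PBWAux.mono_def] at hv1; exact Finsupp.support_smul hv1))
          rw [hvu]
          exact PBWAux.sorted_mem_range hsort
        · exact (hrsupp v hv1).1
      have hf'u : f'.coeff u = c := by
        have hru : r.coeff u = 0 := by
          by_contra hru
          exact lt_irrefl u ((hrsupp u (Finsupp.mem_support_iff.2 hru)).2)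
        rw [hf'_def]
        rw [MonoidAlgebra.coeff_add, Finsupp.add_apply, MonoidAlgebra.coeff_smul,
          Finsupp.smul_apply, PBWAux.mono_def, MonoidAlgebra.coeff_single,
          Finsupp.single_eq_same, smul_eq_mul, mul_one, hru, add_zero]
      have : f' = 0 := hNo f' hf'I hf'supp
      rw [this] at hf'u
      exact hc (by rw [← hf'u]; rfl)
    · -- the leading monomial has a descent: some g j i works
      obtain ⟨a, j, i, b, hdecomp, hij⟩ := PBWAux.not_sorted_decomp hsort
      refine ⟨g j i, h𝒢sub ⟨i, j, hij, rfl⟩, ?_⟩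
      rw [hlm i j hij]
      refine ⟨FreeMonoid.ofList a, FreeMonoid.ofList b, ?_⟩
      apply FreeMonoid.toList.injective
      simp only [FreeMonoid.toList_mul, FreeMonoid.toList_of, FreeMonoid.toList_ofList]
      rw [hdecomp]; simp
  · -- every such 𝒢 a Gröbner basis ⟹ PBW basis
    intro hGB
    have hGB0 := hGB {x | ∃ i j : Fin n, i < j ∧ x = g j i}
      (by rintro x ⟨i, j, hij, rfl⟩; exact hmem i j hij)
      (by rintro x ⟨i, j, hij, rfl⟩; exact hmonic i j hij)
      subset_rfl
    constructor
    · rw [PBWAux.linIndep_iff]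
      intro h hI hsupp
      by_contra h0
      obtain ⟨x, hx𝒢, hdvd⟩ := hGB0.2 h hI h0
      obtain ⟨i, j, hij, rfl⟩ := hx𝒢
      rw [hlm i j hij] at hdvd
      have hmemr : LMon h ∈ Set.range (ordWord (n := n)) :=
        hsupp (PBWAux.LMon_mem h0)
      obtain ⟨α, hα⟩ := hmemr
      exact PBWAux.not_sorted_of_dvd hij hdvd (by rw [← hα]; exact PBWAux.ordWord_sorted α)
    · exact PBWAux.span_top hord I g hmem hmonic hlm
end
end
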